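/- For n = 1, the 3-cocycle m vanishes identically: for all A, B, C ∈ O^±(1,1,ℤ), the vector m_{A,B,C} ∈ ℝ² equals 0. -/
import Mathlib


open Matrix

/-- Square integer matrices of size `2n`. -/
abbrev Mat (n : ℕ) := Matrix (Fin (n + n)) (Fin (n + n)) ℤ

/-- The `2n × 2n` block matrix `[[A, B], [C, D]]`. -/
def fromB {n : ℕ} (A B C D : Matrix (Fin n) (Fin n) ℤ) : Mat n :=
  Matrix.reindex finSumFinEquiv finSumFinEquiv (Matrix.fromBlocks A B C D)

/-- The block matrix `I = [[0, Eₙ], [Eₙ, 0]]`. -/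
def Imat (n : ℕ) : Mat n := fromB 0 1 1 0

/-- Membership in the integral split pseudo-orthogonal group `O^±(n,n,ℤ)`:
`Aᵀ I A = I` or `Aᵀ I A = -I`. -/
def IsOpm (n : ℕ) (A : Mat n) : Prop :=
  Aᵀ * Imat n * A = Imat n ∨ Aᵀ * Imat n * A = -Imat n

/-- The block matrix `J = [[0, 0], [Eₙ, 0]]`. -/
def Jmat (n : ℕ) : Mat n := fromB 0 0 1 0

/-- The sign `iso(A) ∈ {1, -1}` with `Aᵀ I A = iso(A) • I` (for `A ∈ O^±(n,n,ℤ)`). -/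
noncomputable def iso (n : ℕ) (A : Mat n) : ℤ :=
  if Aᵀ * Imat n * A = Imat n then 1 else -1

/-- For a (skew-symmetric) integer matrix `M`, its strictly lower triangular part
`M_low`, with `(M_low)ᵢⱼ = Mᵢⱼ` for `i > j` and `0` otherwise. -/
def lowm {N : ℕ} (M : Matrix (Fin N) (Fin N) ℤ) : Matrix (Fin N) (Fin N) ℤ :=
  Matrix.of fun i j => if j < i then M i j else 0

/-- The diagonal of a matrix, as a vector `M^{diag}`. -/
def diagv {N : ℕ} (M : Matrix (Fin N) (Fin N) ℤ) : Fin N → ℤ := fun i => M i i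

/-- The skew-symmetric matrix `B_A := iso(A)·J − Aᵀ J A`. -/
noncomputable def Bmat (n : ℕ) (A : Mat n) : Mat n := iso n A • Jmat n - Aᵀ * Jmat n * A

/-- The integer vector `-2·m_{A,B,C}`. -/
noncomputable def mint (n : ℕ) (A B C : Mat n) : Fin (n + n) → ℤ :=
  ((A⁻¹)ᵀ * (B⁻¹)ᵀ * (C⁻¹)ᵀ).mulVec
    (Cᵀ.mulVec (diagv (Bᵀ * lowm (Bmat n A) * B))
      + diagv (Cᵀ * lowm (Bmat n (A * B)) * C)
      - iso n A • diagv (Cᵀ * lowm (Bmat n B) * C)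
      - diagv (Cᵀ * Bᵀ * lowm (Bmat n A) * B * C))

/-- The 3-cocycle
`m_{A,B,C} := −(1/2)·(A⁻¹)ᵀ(B⁻¹)ᵀ(C⁻¹)ᵀ·( Cᵀ·(Bᵀ(B_A)_low B)^{diag} + (Cᵀ(B_{AB})_low C)^{diag}`
`− iso(A)·(Cᵀ(B_B)_low C)^{diag} − (CᵀBᵀ(B_A)_low B C)^{diag} )` as a vector in `ℝ^{2n}`. -/
noncomputable def mvec (n : ℕ) (A B C : Mat n) : Fin (n + n) → ℝ :=
  fun i => -(1 / 2 : ℝ) * (mint n A B C i : ℝ)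

lemma Jmat_one : Jmat 1 = !![0,0;1,0] := by decide
lemma Imat_one : Imat 1 = !![0,1;1,0] := by decide

lemma lowm_eq (M : Mat 1) : lowm M = M 1 0 • Jmat 1 := by
  rw [Jmat_one]
  ext i j
  fin_cases i <;> fin_cases j <;> simp [lowm]

lemma opm_prods {M : Mat 1} (h : IsOpm 1 M) :
    M 0 0 * M 1 0 = 0 ∧ M 0 1 * M 1 1 = 0 := by
  rcases h with h | h <;>
  · have h00 := congrFun (congrFun h 0) 0
    have h11 := congrFun (congrFun h 1) 1
    simp [Matrix.mul_apply, Fin.sum_univ_two, Imat_one, Matrix.transpose_apply] at h00 h11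
    constructor <;> nlinarith [h00, h11]

lemma diagv_J {M : Mat 1} (h : IsOpm 1 M) : diagv (Mᵀ * Jmat 1 * M) = 0 := by
  obtain ⟨h1, h2⟩ := opm_prods h
  funext i
  fin_cases i <;>
    simp [diagv, Matrix.mul_apply, Fin.sum_univ_two, Jmat_one, Matrix.transpose_apply] <;>
    first
    | exact (mul_eq_zero.mp h1).symm
    | exact (mul_eq_zero.mp h2).symm

lemma IsOpm.mul {B C : Mat 1} (hB : IsOpm 1 B) (hC : IsOpm 1 C) : IsOpm 1 (B * C) := by
  have key : (B * C)ᵀ * Imat 1 * (B * C) = Cᵀ * (Bᵀ * Imat 1 * B) * C := by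
    rw [Matrix.transpose_mul]; noncomm_ring
  rcases hB with h | h <;> rcases hC with h' | h'
  · left; rw [key, h, h']
  · right; rw [key, h, h']
  · right; rw [key, h, Matrix.mul_neg, Matrix.neg_mul, h']
  · left; rw [key, h, Matrix.mul_neg, Matrix.neg_mul, h', neg_neg]


/-- For `n = 1`, the 3-cocycle `m` vanishes identically:
`m_{A,B,C} = 0 ∈ ℝ²` for all `A, B, C ∈ O^±(1,1,ℤ)`. -/
theorem statement12 (A B C : Mat 1) (hA : IsOpm 1 A) (hB : IsOpm 1 B) (hC : IsOpm 1 C) :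
    mvec 1 A B C = 0 := by
  have hmint : mint 1 A B C = 0 := by
    have e1 : diagv (Bᵀ * lowm (Bmat 1 A) * B) = 0 := by
      rw [lowm_eq, Matrix.mul_smul, Matrix.smul_mul]
      have : diagv ((Bmat 1 A) 1 0 • (Bᵀ * Jmat 1 * B)) =
          (Bmat 1 A) 1 0 • diagv (Bᵀ * Jmat 1 * B) := rfl
      rw [this, diagv_J hB, smul_zero]
    have e2 : diagv (Cᵀ * lowm (Bmat 1 (A * B)) * C) = 0 := by
      rw [lowm_eq, Matrix.mul_smul, Matrix.smul_mul]
      have : diagv ((Bmat 1 (A * B)) 1 0 • (Cᵀ * Jmat 1 * C)) =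
          (Bmat 1 (A * B)) 1 0 • diagv (Cᵀ * Jmat 1 * C) := rfl
      rw [this, diagv_J hC, smul_zero]
    have e3 : diagv (Cᵀ * lowm (Bmat 1 B) * C) = 0 := by
      rw [lowm_eq, Matrix.mul_smul, Matrix.smul_mul]
      have : diagv ((Bmat 1 B) 1 0 • (Cᵀ * Jmat 1 * C)) =
          (Bmat 1 B) 1 0 • diagv (Cᵀ * Jmat 1 * C) := rfl
      rw [this, diagv_J hC, smul_zero]
    have e4 : diagv (Cᵀ * Bᵀ * lowm (Bmat 1 A) * B * C) = 0 := by
      have heq : Cᵀ * Bᵀ * lowm (Bmat 1 A) * B * C =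
          (B * C)ᵀ * lowm (Bmat 1 A) * (B * C) := by
        rw [Matrix.transpose_mul]; noncomm_ring
      rw [heq, lowm_eq, Matrix.mul_smul, Matrix.smul_mul]
      have : diagv ((Bmat 1 A) 1 0 • ((B * C)ᵀ * Jmat 1 * (B * C))) =
          (Bmat 1 A) 1 0 • diagv ((B * C)ᵀ * Jmat 1 * (B * C)) := rfl
      rw [this, diagv_J (hB.mul hC), smul_zero]
    unfold mint
    rw [e1, e2, e3, e4]
    simp
  funext i
  simp [mvec, hmint]
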